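/- For every ε ∈ (0,1) there exists a constant c > 0, depending only on ε, such that the following holds. Let θ > 0, let α ∈ ℝ with 1 − (1−ε)π/θ ≤ α ≤ (1−ε)π/θ − 1, let t ∈ ℝ, let k ≥ 1 be an integer, and set λ = α + i t. Then |λ² − (kπ/θ)² − 1|² ≥ c·|λ|⁴ and |λ² − (kπ/θ)² − 1|² ≥ c·(kπ/θ)⁴. -/

import Mathlib

open Real

/-- Lower bounds on the denominators `λ² − (kπ/θ)² − 1` in the Fourier–Mellin representation
of the solution of the free-slip Stokes system on a wedge, for `α ∈ I_ε` and `λ = α + it`. -/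
theorem stokes_denominator_lower_bounds (ε : ℝ) (hε : ε ∈ Set.Ioo (0:ℝ) 1) :
    ∃ c : ℝ, 0 < c ∧ ∀ θ : ℝ, 0 < θ →
      ∀ α : ℝ, 1 - (1 - ε) * π / θ ≤ α → α ≤ (1 - ε) * π / θ - 1 →
      ∀ t : ℝ, ∀ k : ℕ, 1 ≤ k →
      c * ‖(α : ℂ) + t * Complex.I‖^4 ≤
        ‖((α : ℂ) + t * Complex.I)^2
          - (((k : ℝ) * π / θ : ℝ) : ℂ)^2 - 1‖^2 ∧
      c * ((k : ℝ) * π / θ)^4 ≤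
        ‖((α : ℂ) + t * Complex.I)^2
          - (((k : ℝ) * π / θ : ℝ) : ℂ)^2 - 1‖^2 := by
  obtain ⟨hε0, hε1⟩ := hε
  refine ⟨ε^2, by positivity, ?_⟩
  intro θ hθ α hα1 hα2 t k hk
  set μ : ℝ := (k : ℝ) * π / θ with hμdef
  clear_value μ
  have hπθ : 0 < π / θ := div_pos Real.pi_pos hθ
  have hk1 : (1 : ℝ) ≤ (k : ℝ) := by exact_mod_cast hk
  have hμ1 : π / θ ≤ μ := by
    rw [hμdef, mul_div_assoc]
    nlinarith
  have hμpos : 0 < μ := lt_of_lt_of_le hπθ hμ1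
  have habs : |α| + 1 ≤ (1 - ε) * μ := by
    have h1 : (1 - ε) * (π / θ) ≤ (1 - ε) * μ := by nlinarith
    have h2 : (1 - ε) * π / θ = (1 - ε) * (π / θ) := by ring
    have h3 : |α| ≤ (1 - ε) * μ - 1 := by
      rw [abs_le]; constructor <;> nlinarith
    linarith
  have hμge : 1 ≤ (1 - ε) * μ := by nlinarith [abs_nonneg α]
  have hb : α ^ 2 ≤ ((1 - ε) * μ - 1) ^ 2 := by
    have := pow_le_pow_left₀ (abs_nonneg α) (by linarith : |α| ≤ (1 - ε) * μ - 1) 2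
    simpa [sq_abs] using this
  have hA1 : ε * μ ^ 2 ≤ μ ^ 2 + 1 - α ^ 2 := by nlinarith
  have hA2 : ε * α ^ 2 ≤ μ ^ 2 + 1 - α ^ 2 := by nlinarith
  -- compute the modulus squared
  have hD : ‖((α : ℂ) + t * Complex.I)^2 - ((μ : ℝ) : ℂ)^2 - 1‖^2
      = (α ^ 2 - t ^ 2 - μ ^ 2 - 1) ^ 2 + (2 * α * t) ^ 2 := by
    rw [Complex.sq_norm, Complex.normSq_apply]
    simp [pow_two]
    ring
  have hL : ‖(α : ℂ) + t * Complex.I‖^4 = (α ^ 2 + t ^ 2) ^ 2 := by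
    have : ‖(α : ℂ) + t * Complex.I‖^4
        = (‖(α : ℂ) + t * Complex.I‖^2)^2 := by ring
    rw [this, Complex.sq_norm, Complex.normSq_apply]
    simp [pow_two]
  rw [hD, hL]
  have h1 : ε * (α ^ 2 + t ^ 2) ≤ t ^ 2 + (μ ^ 2 + 1 - α ^ 2) := by nlinarith [sq_nonneg t]
  have h2 : ε * μ ^ 2 ≤ t ^ 2 + (μ ^ 2 + 1 - α ^ 2) := by nlinarith [sq_nonneg t]
  have hpos1 : 0 ≤ ε * (α ^ 2 + t ^ 2) := by positivity
  have hpos2 : 0 ≤ ε * μ ^ 2 := by positivity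
  have key1 : (ε * (α ^ 2 + t ^ 2)) ^ 2 ≤ (t ^ 2 + (μ ^ 2 + 1 - α ^ 2)) ^ 2 :=
    pow_le_pow_left₀ hpos1 h1 2
  have key2 : (ε * μ ^ 2) ^ 2 ≤ (t ^ 2 + (μ ^ 2 + 1 - α ^ 2)) ^ 2 :=
    pow_le_pow_left₀ hpos2 h2 2
  have e1 : (α ^ 2 - t ^ 2 - μ ^ 2 - 1) ^ 2 = (t ^ 2 + (μ ^ 2 + 1 - α ^ 2)) ^ 2 := by ring
  have e2 : ε ^ 2 * (α ^ 2 + t ^ 2) ^ 2 = (ε * (α ^ 2 + t ^ 2)) ^ 2 := by ring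
  have e3 : ε ^ 2 * μ ^ 4 = (ε * μ ^ 2) ^ 2 := by ring
  constructor
  · linarith [key1, sq_nonneg (2 * α * t), e1, e2]
  · linarith [key2, sq_nonneg (2 * α * t), e1, e3]
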